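/- For every real α > 0 and every real x > 0, ∑_{m=0}^∞ (−1)^m/(m!·Γ(m+α+1))·(x/2)^{2m+α} = (1/(π x Γ(α)))·(x/2)^α · ∫_0^{π/2} ∫_0^π 2·(sin ϑ)^{2α−1}·sin φ · [ sin(x·cos ϑ·sin φ) + x·cos ϑ·sin φ·cos(x·cos ϑ·sin φ) ] dφ dϑ. -/

import Mathlib

open Real MeasureTheory

lemma besselW (n : ℕ) :
    ∏ i ∈ Finset.range n, (2*(i:ℝ)+1)/(2*(i:ℝ)+2)
      = (Nat.factorial (2*n) : ℝ) / (4^n * (Nat.factorial n : ℝ)^2) := by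
  induction n with
  | zero => simp
  | succ k ih =>
    rw [Finset.prod_range_succ, ih]
    have h1 : (Nat.factorial (2*(k+1)) : ℝ) = (2*(k:ℝ)+2)*(2*(k:ℝ)+1)*(Nat.factorial (2*k) : ℝ) := by
      have : 2*(k+1) = (2*k+1)+1 := by ring
      rw [this, Nat.factorial_succ, Nat.factorial_succ]
      push_cast; ring
    have h2 : (Nat.factorial (k+1) : ℝ) = ((k:ℝ)+1) * (Nat.factorial k : ℝ) := by
      rw [Nat.factorial_succ]; push_cast; ring
    have hk : (Nat.factorial k : ℝ) ≠ 0 := Nat.cast_ne_zero.2 k.factorial_ne_zero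
    have h4 : (4:ℝ)^k ≠ 0 := by positivity
    rw [h1, h2]
    field_simp
    ring

lemma besselHasSum (u : ℝ) :
    HasSum (fun m : ℕ => (-1)^m * (2*(m:ℝ)+2) / (Nat.factorial (2*m+1) : ℝ) * u^(2*m+1))
      (Real.sin u + u * Real.cos u) := by
  have h := (Real.hasSum_sin u).add ((Real.hasSum_cos u).mul_left u)
  convert h using 2 with m
  have hf : (Nat.factorial (2*m+1) : ℝ) = (2*(m:ℝ)+1) * (Nat.factorial (2*m) : ℝ) := by
    rw [Nat.factorial_succ]; push_cast; ring
  have h0 : (Nat.factorial (2*m) : ℝ) ≠ 0 := Nat.cast_ne_zero.2 (2*m).factorial_ne_zero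
  rw [hf]
  have h1 : (2*(m:ℝ)+1) ≠ 0 := by positivity
  field_simp
  ring

lemma besselSummable {x : ℝ} (hx : 0 ≤ x) :
    Summable (fun m : ℕ => (2*(m:ℝ)+2) / (Nat.factorial (2*m+1) : ℝ) * x^(2*m+1)) := by
  have hs : Summable (fun m : ℕ => 2*x*((x^2)^m / (Nat.factorial m : ℝ))) :=
    (Real.summable_pow_div_factorial (x^2)).mul_left (2*x)
  refine Summable.of_nonneg_of_le (fun m => by positivity) (fun m => ?_) hs
  have hd : (Nat.factorial m : ℝ) * (Nat.factorial (m+1) : ℝ) ≤ (Nat.factorial (2*m+1) : ℝ) := by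
    have := Nat.le_of_dvd (Nat.factorial_pos _) (Nat.factorial_mul_factorial_dvd_factorial_add m (m+1))
    exact_mod_cast (by simpa [two_mul, Nat.add_assoc] using this : m.factorial * (m+1).factorial ≤ (2*m+1).factorial)
  have hm : (0:ℝ) < Nat.factorial m := by exact_mod_cast Nat.factorial_pos m
  have hm1 : (0:ℝ) < Nat.factorial (m+1) := by exact_mod_cast Nat.factorial_pos (m+1)
  have hfs : (Nat.factorial (m+1) : ℝ) = ((m:ℝ)+1) * Nat.factorial m := by
    rw [Nat.factorial_succ]; push_cast; ring
  have key : (2*(m:ℝ)+2) / (Nat.factorial (2*m+1) : ℝ) ≤ 2 / (Nat.factorial m : ℝ)^2 := by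
    rw [div_le_div_iff₀ (by exact_mod_cast Nat.factorial_pos (2*m+1)) (by positivity)]
    calc (2*(m:ℝ)+2) * (Nat.factorial m : ℝ)^2
        = 2 * ((Nat.factorial m : ℝ) * (((m:ℝ)+1) * Nat.factorial m)) := by ring
      _ ≤ 2 * (Nat.factorial (2*m+1) : ℝ) := by
          rw [← hfs]; nlinarith [hd]
  calc (2*(m:ℝ)+2) / (Nat.factorial (2*m+1) : ℝ) * x^(2*m+1)
      ≤ 2 / (Nat.factorial m : ℝ)^2 * x^(2*m+1) := by
        apply mul_le_mul_of_nonneg_right key (by positivity)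
    _ ≤ 2 / (Nat.factorial m : ℝ) * x^(2*m+1) := by
        apply mul_le_mul_of_nonneg_right _ (by positivity)
        apply div_le_div_of_nonneg_left (by norm_num) hm
        calc (Nat.factorial m : ℝ) = (Nat.factorial m : ℝ) * 1 := by ring
          _ ≤ (Nat.factorial m : ℝ)^2 := by nlinarith [show (1:ℝ) ≤ Nat.factorial m from by exact_mod_cast Nat.one_le_iff_ne_zero.2 m.factorial_ne_zero]
    _ = 2*x*((x^2)^m / (Nat.factorial m : ℝ)) := by
        rw [pow_succ, pow_mul]; ring

lemma besselII {α : ℝ} (hα : 0 < α) (k : ℕ) :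
    IntervalIntegrable (fun ϑ => Real.sin ϑ ^ (2*α-1) * Real.cos ϑ ^ k) volume 0 (π/2) := by
  rcases le_or_gt 0 (2*α-1) with hp | hp
  · apply Continuous.intervalIntegrable
    exact (Real.continuous_sin.rpow_const (fun x => Or.inr hp)).mul (Real.continuous_cos.pow k)
  · have hbig : IntervalIntegrable (fun ϑ : ℝ => (2/π)^(2*α-1) * ϑ^(2*α-1)) volume 0 (π/2) :=
      (intervalIntegral.intervalIntegrable_rpow' (by linarith)).const_mul _
    refine hbig.mono_fun ?_ ?_
    · apply Measurable.aestronglyMeasurable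
      fun_prop
    · have hsub : Set.uIoc (0:ℝ) (π/2) = Set.Ioc 0 (π/2) := Set.uIoc_of_le (by positivity)
      rw [Filter.EventuallyLE, hsub, ae_restrict_iff' measurableSet_Ioc]
      filter_upwards with ϑ hϑ
      obtain ⟨h0, h1⟩ := hϑ
      have hsinpos : 0 < Real.sin ϑ := Real.sin_pos_of_pos_of_lt_pi h0 (by linarith [Real.pi_pos])
      have hsin_ge : 2/π * ϑ ≤ Real.sin ϑ := Real.mul_le_sin h0.le h1
      have hfrac : 0 < 2/π * ϑ := by positivity
      have hmono := Real.antitoneOn_rpow_Ioi_of_exponent_nonpos (le_of_lt hp)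
        (Set.mem_Ioi.2 hfrac) (Set.mem_Ioi.2 hsinpos) hsin_ge
      have hnorm : ‖Real.sin ϑ ^ (2*α-1) * Real.cos ϑ ^ k‖
          ≤ Real.sin ϑ ^ (2*α-1) := by
        rw [norm_mul, Real.norm_of_nonneg (Real.rpow_nonneg hsinpos.le _)]
        calc Real.sin ϑ ^ (2*α-1) * ‖Real.cos ϑ ^ k‖
            ≤ Real.sin ϑ ^ (2*α-1) * 1 := by
              apply mul_le_mul_of_nonneg_left _ (Real.rpow_nonneg hsinpos.le _)
              rw [norm_pow]
              exact pow_le_one₀ (norm_nonneg _) (by simpa using Real.abs_cos_le_one ϑ)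
          _ = Real.sin ϑ ^ (2*α-1) := by ring
      refine hnorm.trans ?_
      have : (2/π * ϑ)^(2*α-1) = (2/π)^(2*α-1) * ϑ^(2*α-1) :=
        Real.mul_rpow (by positivity) h0.le
      rw [Real.norm_of_nonneg (by positivity)]
      calc Real.sin ϑ ^ (2*α-1) ≤ (2/π * ϑ)^(2*α-1) := hmono
        _ = (2/π)^(2*α-1) * ϑ^(2*α-1) := this

lemma besselBase {α : ℝ} (hα : 0 < α) :
    ∫ ϑ in (0:ℝ)..(π/2), Real.sin ϑ ^ (2*α-1) * Real.cos ϑ ^ 1 = 1/(2*α) := by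
  have key : ∫ ϑ in (0:ℝ)..(π/2), (2*α) * (Real.sin ϑ ^ (2*α-1) * Real.cos ϑ ^ 1)
      = Real.sin (π/2) ^ (2*α) - Real.sin 0 ^ (2*α) := by
    apply intervalIntegral.integral_eq_sub_of_hasDeriv_right_of_le (f := fun ϑ => Real.sin ϑ ^ (2*α)) (by positivity)
    · exact (Real.continuous_sin.rpow_const (fun x => Or.inr (by positivity))).continuousOn
    · intro ϑ hϑ
      obtain ⟨h0, h1⟩ := hϑ
      have hsinpos : 0 < Real.sin ϑ := Real.sin_pos_of_pos_of_lt_pi h0 (by linarith [Real.pi_pos])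
      have hd : HasDerivAt (fun ϑ => Real.sin ϑ ^ (2*α))
          ((2*α * Real.sin ϑ ^ (2*α-1)) * Real.cos ϑ) ϑ :=
        (Real.hasDerivAt_rpow_const (Or.inl hsinpos.ne')).comp ϑ (Real.hasDerivAt_sin ϑ)
      have : (2*α * Real.sin ϑ ^ (2*α-1)) * Real.cos ϑ
          = (2*α) * (Real.sin ϑ ^ (2*α-1) * Real.cos ϑ ^ 1) := by ring
      exact (this ▸ hd).hasDerivWithinAt
    · exact (besselII hα 1).const_mul _
  rw [intervalIntegral.integral_const_mul] at key
  rw [Real.sin_pi_div_two, Real.sin_zero, Real.one_rpow, Real.zero_rpow (by positivity)] at key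
  field_simp at key ⊢
  linarith

lemma besselStep {α : ℝ} (hα : 0 < α) (k : ℕ) :
    (2*α+(k:ℝ)+1) * ∫ ϑ in (0:ℝ)..(π/2), Real.sin ϑ ^ (2*α-1) * Real.cos ϑ ^ (k+2)
      = ((k:ℝ)+1) * ∫ ϑ in (0:ℝ)..(π/2), Real.sin ϑ ^ (2*α-1) * Real.cos ϑ ^ k := by
  have key : ∫ ϑ in (0:ℝ)..(π/2),
      ((2*α+(k:ℝ)+1) * (Real.sin ϑ ^ (2*α-1) * Real.cos ϑ ^ (k+2))
        - ((k:ℝ)+1) * (Real.sin ϑ ^ (2*α-1) * Real.cos ϑ ^ k))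
      = Real.sin (π/2) ^ (2*α) * Real.cos (π/2) ^ (k+1)
        - Real.sin 0 ^ (2*α) * Real.cos 0 ^ (k+1) := by
    apply intervalIntegral.integral_eq_sub_of_hasDeriv_right_of_le
      (f := fun ϑ => Real.sin ϑ ^ (2*α) * Real.cos ϑ ^ (k+1)) (by positivity)
    · exact ((Real.continuous_sin.rpow_const (fun x => Or.inr (by positivity))).mul
        (Real.continuous_cos.pow _)).continuousOn
    · intro ϑ hϑ
      obtain ⟨h0, h1⟩ := hϑ
      have hsinpos : 0 < Real.sin ϑ := Real.sin_pos_of_pos_of_lt_pi h0 (by linarith [Real.pi_pos])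
      have hd1 : HasDerivAt (fun ϑ => Real.sin ϑ ^ (2*α))
          ((2*α * Real.sin ϑ ^ (2*α-1)) * Real.cos ϑ) ϑ :=
        (Real.hasDerivAt_rpow_const (Or.inl hsinpos.ne')).comp ϑ (Real.hasDerivAt_sin ϑ)
      have hd2 : HasDerivAt (fun ϑ => Real.cos ϑ ^ (k+1))
          (((k:ℝ)+1) * Real.cos ϑ ^ k * (-Real.sin ϑ)) ϑ := by
        have := (hasDerivAt_pow (k+1) (Real.cos ϑ)).comp ϑ (Real.hasDerivAt_cos ϑ)
        simpa [mul_comm, mul_assoc, Nat.cast_add, Function.comp_def] using this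
      have hd := hd1.mul hd2
      have hrw : Real.sin ϑ ^ (2*α) = Real.sin ϑ ^ (2*α-1) * Real.sin ϑ := by
        rw [← Real.rpow_add_one hsinpos.ne' (2*α-1)]
        norm_num
      have hsq : Real.sin ϑ * Real.sin ϑ = 1 - Real.cos ϑ ^ 2 := by
        have := Real.sin_sq_add_cos_sq ϑ
        nlinarith
      have heq : (2*α * Real.sin ϑ ^ (2*α-1)) * Real.cos ϑ * Real.cos ϑ ^ (k+1)
            + Real.sin ϑ ^ (2*α) * (((k:ℝ)+1) * Real.cos ϑ ^ k * (-Real.sin ϑ))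
          = (2*α+(k:ℝ)+1) * (Real.sin ϑ ^ (2*α-1) * Real.cos ϑ ^ (k+2))
            - ((k:ℝ)+1) * (Real.sin ϑ ^ (2*α-1) * Real.cos ϑ ^ k) := by
        rw [hrw]
        linear_combination (-(Real.sin ϑ ^ (2*α-1) * ((k:ℝ)+1) * Real.cos ϑ ^ k)) * hsq
      exact (heq ▸ hd).hasDerivWithinAt
    · exact ((besselII hα (k+2)).const_mul _).sub ((besselII hα k).const_mul _)
  rw [intervalIntegral.integral_sub ((besselII hα (k+2)).const_mul _) ((besselII hα k).const_mul _),
    intervalIntegral.integral_const_mul, intervalIntegral.integral_const_mul] at key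
  rw [Real.sin_pi_div_two, Real.sin_zero, Real.cos_pi_div_two, Real.one_rpow,
    Real.zero_rpow (by positivity), Real.cos_zero] at key
  simp at key
  linarith

lemma besselA {α : ℝ} (hα : 0 < α) (m : ℕ) :
    ∫ ϑ in (0:ℝ)..(π/2), Real.sin ϑ ^ (2*α-1) * Real.cos ϑ ^ (2*m+1)
      = Real.Gamma α * (Nat.factorial m : ℝ) / (2 * Real.Gamma ((m:ℝ)+α+1)) := by
  induction m with
  | zero =>
    have h1 : ((0:ℕ):ℝ) + α + 1 = α + 1 := by push_cast; ring
    rw [show 2*0+1 = 1 from rfl, besselBase hα, h1, Real.Gamma_add_one hα.ne']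
    have hΓ : Real.Gamma α ≠ 0 := (Real.Gamma_pos_of_pos hα).ne'
    field_simp
    ring
  | succ k ih =>
    have hstep := besselStep hα (2*k+1)
    have hexp : (2*k+1)+2 = 2*(k+1)+1 := by ring
    rw [hexp, ih] at hstep
    have hpos : (0:ℝ) < 2*α + (2*k+1:ℕ) + 1 := by positivity
    have hΓpos : 0 < Real.Gamma ((k:ℝ)+α+1) := Real.Gamma_pos_of_pos (by positivity)
    have hΓpos' : 0 < Real.Gamma (((k:ℕ)+1:ℝ)+α+1) := Real.Gamma_pos_of_pos (by positivity)
    have hΓrec : Real.Gamma (((k:ℝ)+1)+α+1) = ((k:ℝ)+α+1) * Real.Gamma ((k:ℝ)+α+1) := by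
      rw [show ((k:ℝ)+1)+α+1 = ((k:ℝ)+α+1)+1 by ring, Real.Gamma_add_one (by positivity)]
    have hfac : (Nat.factorial (k+1) : ℝ) = ((k:ℝ)+1) * (Nat.factorial k : ℝ) := by
      rw [Nat.factorial_succ]; push_cast; ring
    have hA := hstep
    push_cast at hA ⊢
    rw [hΓrec, hfac]
    have h2 : (2*α + (2*(k:ℝ)+1) + 1) ≠ 0 := by positivity
    field_simp at hA ⊢
    nlinarith [hA, hΓpos, (Real.Gamma_pos_of_pos hα)]

lemma besselInner {α x : ℝ} (hx : 0 < x) (ϑ : ℝ) :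
    (∫ φ in (0:ℝ)..π,
        2 * Real.sin ϑ ^ (2*α-1) * Real.sin φ *
          (Real.sin (x * Real.cos ϑ * Real.sin φ) +
            x * Real.cos ϑ * Real.sin φ * Real.cos (x * Real.cos ϑ * Real.sin φ)))
      = ∑' m : ℕ, 2 * Real.sin ϑ ^ (2*α-1) * Real.cos ϑ ^ (2*m+1) *
          ((-1)^m * (2*(m:ℝ)+2) / (Nat.factorial (2*m+1) : ℝ) * x^(2*m+1) *
            (∫ φ in (0:ℝ)..π, Real.sin φ ^ (2*m+2))) := by
  set K := 2 * Real.sin ϑ ^ (2*α-1) with hK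
  set c := x * Real.cos ϑ with hc
  set F : ℕ → ℝ → ℝ := fun m φ =>
    K * ((-1)^m * (2*(m:ℝ)+2) / (Nat.factorial (2*m+1) : ℝ) * c^(2*m+1)) * Real.sin φ ^ (2*m+2)
    with hF
  have hpt : ∀ φ : ℝ,
      K * Real.sin φ * (Real.sin (c * Real.sin φ) + c * Real.sin φ * Real.cos (c * Real.sin φ))
        = ∑' m, F m φ := by
    intro φ
    have hs := (besselHasSum (c * Real.sin φ)).mul_left (K * Real.sin φ)
    have : (fun m : ℕ => K * Real.sin φ *
        ((-1)^m * (2*(m:ℝ)+2) / (Nat.factorial (2*m+1) : ℝ) * (c * Real.sin φ)^(2*m+1:ℕ)))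
        = fun m => F m φ := by
      funext m
      simp only [hF, mul_pow]
      ring
    rw [this] at hs
    exact hs.tsum_eq.symm
  have hcont : ∀ m : ℕ, Continuous (F m) := by
    intro m; exact (continuous_const.mul (Real.continuous_sin.pow _))
  have hFint : ∀ m : ℕ, Integrable (F m) (volume.restrict (Set.Ioc (0:ℝ) π)) :=
    fun m => (intervalIntegrable_iff_integrableOn_Ioc_of_le Real.pi_pos.le).1
      ((hcont m).intervalIntegrable 0 π)
  have hcle : |c| ≤ x := by
    rw [hc, abs_mul, abs_of_pos hx]
    calc x * |Real.cos ϑ| ≤ x * 1 := by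
          exact mul_le_mul_of_nonneg_left (Real.abs_cos_le_one ϑ) hx.le
      _ = x := by ring
  have hbound : ∀ m : ℕ, (∫ φ in Set.Ioc (0:ℝ) π, ‖F m φ‖)
      ≤ (|K| * π) * ((2*(m:ℝ)+2) / (Nat.factorial (2*m+1) : ℝ) * x^(2*m+1)) := by
    intro m
    have hptb : ∀ φ ∈ Set.Ioc (0:ℝ) π, ‖F m φ‖
        ≤ |K| * ((2*(m:ℝ)+2) / (Nat.factorial (2*m+1) : ℝ) * x^(2*m+1)) := by
      intro φ _
      have h1 : ‖F m φ‖ = |K| * ((2*(m:ℝ)+2) / (Nat.factorial (2*m+1) : ℝ))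
          * |c|^(2*m+1) * |Real.sin φ|^(2*m+2) := by
        simp only [hF, norm_mul, Real.norm_eq_abs, abs_mul, abs_div, abs_pow, abs_neg,
          abs_one, one_pow]
        rw [abs_of_nonneg (show (0:ℝ) ≤ 2*(m:ℝ)+2 by positivity),
          abs_of_nonneg (show (0:ℝ) ≤ ((Nat.factorial (2*m+1) : ℝ)) by positivity)]
        ring
      rw [h1]
      have h2 : |c|^(2*m+1) ≤ x^(2*m+1) := pow_le_pow_left₀ (abs_nonneg _) hcle _
      have h3 : |Real.sin φ|^(2*m+2) ≤ 1 :=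
        pow_le_one₀ (abs_nonneg _) (Real.abs_sin_le_one φ)
      have h4 : (0:ℝ) ≤ (2*(m:ℝ)+2) / (Nat.factorial (2*m+1) : ℝ) := by positivity
      calc |K| * ((2*(m:ℝ)+2) / (Nat.factorial (2*m+1) : ℝ)) * |c|^(2*m+1) * |Real.sin φ|^(2*m+2)
          ≤ |K| * ((2*(m:ℝ)+2) / (Nat.factorial (2*m+1) : ℝ)) * |c|^(2*m+1) * 1 := by
            apply mul_le_mul_of_nonneg_left h3 (by positivity)
        _ = |K| * ((2*(m:ℝ)+2) / (Nat.factorial (2*m+1) : ℝ)) * |c|^(2*m+1) := by ring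
        _ ≤ |K| * ((2*(m:ℝ)+2) / (Nat.factorial (2*m+1) : ℝ)) * x^(2*m+1) := by
            apply mul_le_mul_of_nonneg_left h2 (by positivity)
        _ = |K| * ((2*(m:ℝ)+2) / (Nat.factorial (2*m+1) : ℝ) * x^(2*m+1)) := by ring
    have hconst : IntegrableOn
        (fun _ : ℝ => |K| * ((2*(m:ℝ)+2) / (Nat.factorial (2*m+1) : ℝ) * x^(2*m+1)))
        (Set.Ioc (0:ℝ) π) volume := integrableOn_const measure_Ioc_lt_top.ne
    calc (∫ φ in Set.Ioc (0:ℝ) π, ‖F m φ‖)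
        ≤ ∫ _ in Set.Ioc (0:ℝ) π,
            |K| * ((2*(m:ℝ)+2) / (Nat.factorial (2*m+1) : ℝ) * x^(2*m+1)) :=
          setIntegral_mono_on (hFint m).norm hconst measurableSet_Ioc hptb
      _ = (|K| * π) * ((2*(m:ℝ)+2) / (Nat.factorial (2*m+1) : ℝ) * x^(2*m+1)) := by
          rw [setIntegral_const, Real.volume_real_Ioc_of_le Real.pi_pos.le, sub_zero,
            smul_eq_mul]
          ring
  have hsum : Summable (fun m : ℕ => ∫ φ in Set.Ioc (0:ℝ) π, ‖F m φ‖) := by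
    refine Summable.of_nonneg_of_le (fun m => integral_nonneg (fun φ => norm_nonneg _))
      hbound ?_
    exact (besselSummable hx.le).mul_left _
  have hswap := MeasureTheory.integral_tsum_of_summable_integral_norm hFint hsum
  rw [intervalIntegral.integral_of_le Real.pi_pos.le]
  have hcongr : ∫ φ in Set.Ioc (0:ℝ) π,
      (K * Real.sin φ *
        (Real.sin (c * Real.sin φ) + c * Real.sin φ * Real.cos (c * Real.sin φ)))
      = ∫ φ in Set.Ioc (0:ℝ) π, ∑' m, F m φ :=
    integral_congr_ae (Filter.Eventually.of_forall hpt)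
  have hgoal : ∫ φ in Set.Ioc (0:ℝ) π,
      (2 * Real.sin ϑ ^ (2*α-1) * Real.sin φ *
        (Real.sin (x * Real.cos ϑ * Real.sin φ) +
          x * Real.cos ϑ * Real.sin φ * Real.cos (x * Real.cos ϑ * Real.sin φ)))
      = ∑' m, ∫ φ in Set.Ioc (0:ℝ) π, F m φ := by
    rw [← hswap] at hcongr
    exact hcongr
  rw [hgoal]
  apply tsum_congr
  intro m
  have hval : ∫ φ in Set.Ioc (0:ℝ) π, F m φ
      = K * ((-1)^m * (2*(m:ℝ)+2) / (Nat.factorial (2*m+1) : ℝ) * c^(2*m+1))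
        * ∫ φ in (0:ℝ)..π, Real.sin φ ^ (2*m+2) := by
    rw [← intervalIntegral.integral_of_le Real.pi_pos.le,
      ← intervalIntegral.integral_const_mul]
  rw [hval, hc, mul_pow]
  ring

theorem bessel_J_double_integral_representation (α x : ℝ) (hα : 0 < α) (hx : 0 < x) :
    ∑' m : ℕ, (-1) ^ m / (m.factorial * Real.Gamma (m + α + 1)) *
        (x / 2) ^ (2 * (m : ℝ) + α)
      = (1 / (π * x * Real.Gamma α)) * (x / 2) ^ α *
        ∫ ϑ in (0:ℝ)..(π / 2), ∫ φ in (0:ℝ)..π,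
          2 * Real.sin ϑ ^ (2 * α - 1) * Real.sin φ *
            (Real.sin (x * Real.cos ϑ * Real.sin φ) +
              x * Real.cos ϑ * Real.sin φ * Real.cos (x * Real.cos ϑ * Real.sin φ)) := by
  set B : ℕ → ℝ := fun m => ∫ φ in (0:ℝ)..π, Real.sin φ ^ (2*m+2) with hB
  set e : ℕ → ℝ := fun m =>
    (-1)^m * (2*(m:ℝ)+2) / (Nat.factorial (2*m+1) : ℝ) * x^(2*m+1) * B m with he
  set F2 : ℕ → ℝ → ℝ := fun m ϑ =>
    (2 * e m) * (Real.sin ϑ ^ (2*α-1) * Real.cos ϑ ^ (2*m+1)) with hF2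
  have hq : (0:ℝ) < π/2 := by positivity
  -- rewrite the inner integral
  have h1 : (∫ ϑ in (0:ℝ)..(π / 2), ∫ φ in (0:ℝ)..π,
        2 * Real.sin ϑ ^ (2 * α - 1) * Real.sin φ *
          (Real.sin (x * Real.cos ϑ * Real.sin φ) +
            x * Real.cos ϑ * Real.sin φ * Real.cos (x * Real.cos ϑ * Real.sin φ)))
      = ∫ ϑ in (0:ℝ)..(π/2), ∑' m, F2 m ϑ := by
    apply intervalIntegral.integral_congr
    intro ϑ _
    simp only []
    rw [besselInner (α := α) hx ϑ]
    exact tsum_congr (fun m => by rw [hF2]; ring)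
  -- bounds on B
  have hBnonneg : ∀ m : ℕ, 0 ≤ B m := by
    intro m
    apply intervalIntegral.integral_nonneg Real.pi_pos.le
    intro φ _
    have : Real.sin φ ^ (2*m+2) = (Real.sin φ ^ 2) ^ (m+1) := by
      rw [← pow_mul]; ring_nf
    rw [this]; positivity
  have hBle : ∀ m : ℕ, B m ≤ π := by
    intro m
    have := intervalIntegral.integral_mono_on (μ := volume) (f := fun φ => Real.sin φ ^ (2*m+2))
      (g := fun _ => (1:ℝ)) Real.pi_pos.le
      ((Real.continuous_sin.pow _).intervalIntegrable 0 π)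
      (intervalIntegrable_const)
      (fun φ _ => by
        calc Real.sin φ ^ (2*m+2) = |Real.sin φ| ^ (2*m+2) := by
              rw [← abs_pow, abs_of_nonneg]
              have : Real.sin φ ^ (2*m+2) = (Real.sin φ ^ 2) ^ (m+1) := by
                rw [← pow_mul]; ring_nf
              rw [this]; positivity
          _ ≤ 1 := pow_le_one₀ (abs_nonneg _) (Real.abs_sin_le_one φ))
    simpa using this
  -- integrability of F2
  have hFint : ∀ m : ℕ, Integrable (F2 m) (volume.restrict (Set.Ioc (0:ℝ) (π/2))) :=
    fun m => (intervalIntegrable_iff_integrableOn_Ioc_of_le hq.le).1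
      ((besselII hα (2*m+1)).const_mul _)
  -- bound on the norms of e
  have hcoefpos : ∀ m : ℕ, (0:ℝ) ≤ (2*(m:ℝ)+2) / (Nat.factorial (2*m+1) : ℝ) * x^(2*m+1) := by
    intro m; positivity
  have heabs : ∀ m : ℕ, |e m| ≤ (2*(m:ℝ)+2) / (Nat.factorial (2*m+1) : ℝ) * x^(2*m+1) * π := by
    intro m
    rw [he]
    simp only [abs_mul, abs_div, abs_pow, abs_neg, abs_one, one_pow]
    rw [abs_of_nonneg (show (0:ℝ) ≤ 2*(m:ℝ)+2 by positivity),
      abs_of_nonneg (show (0:ℝ) ≤ (Nat.factorial (2*m+1) : ℝ) by positivity),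
      abs_of_pos hx, abs_of_nonneg (hBnonneg m), one_mul]
    exact mul_le_mul_of_nonneg_left (hBle m) (hcoefpos m)
  -- value of ∫ sin^(2α-1) cos on Ioc
  have hA0 : ∫ ϑ in Set.Ioc (0:ℝ) (π/2), Real.sin ϑ ^ (2*α-1) * Real.cos ϑ ^ 1
      = 1/(2*α) := by
    rw [← intervalIntegral.integral_of_le hq.le]; exact besselBase hα
  -- bound on integrals of norms
  have hbound : ∀ m : ℕ, (∫ ϑ in Set.Ioc (0:ℝ) (π/2), ‖F2 m ϑ‖)
      ≤ (π/α) * ((2*(m:ℝ)+2) / (Nat.factorial (2*m+1) : ℝ) * x^(2*m+1)) := by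
    intro m
    have hptb : ∀ ϑ ∈ Set.Ioc (0:ℝ) (π/2), ‖F2 m ϑ‖
        ≤ (2*|e m|) * (Real.sin ϑ ^ (2*α-1) * Real.cos ϑ ^ 1) := by
      intro ϑ hϑ
      obtain ⟨h0, h1'⟩ := hϑ
      have hsinpos : 0 < Real.sin ϑ := Real.sin_pos_of_pos_of_lt_pi h0 (by linarith [Real.pi_pos])
      have hcos : 0 ≤ Real.cos ϑ := Real.cos_nonneg_of_mem_Icc ⟨by linarith [Real.pi_pos], h1'⟩
      have hcos1 : Real.cos ϑ ≤ 1 := Real.cos_le_one ϑ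
      have hnorm : ‖F2 m ϑ‖ = (2*|e m|) * (Real.sin ϑ ^ (2*α-1) * Real.cos ϑ ^ (2*m+1)) := by
        rw [hF2]
        simp only [norm_mul, Real.norm_eq_abs, abs_mul, abs_pow]
        rw [abs_of_nonneg (Real.rpow_nonneg hsinpos.le _), abs_of_nonneg hcos]
        rw [abs_mul]
        norm_num
      rw [hnorm]
      apply mul_le_mul_of_nonneg_left _ (by positivity)
      apply mul_le_mul_of_nonneg_left _ (Real.rpow_nonneg hsinpos.le _)
      calc Real.cos ϑ ^ (2*m+1) ≤ Real.cos ϑ ^ 1 :=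
            pow_le_pow_of_le_one hcos hcos1 (by omega)
        _ = Real.cos ϑ ^ 1 := rfl
    have hconstint : IntegrableOn
        (fun ϑ => (2*|e m|) * (Real.sin ϑ ^ (2*α-1) * Real.cos ϑ ^ 1))
        (Set.Ioc (0:ℝ) (π/2)) volume :=
      (intervalIntegrable_iff_integrableOn_Ioc_of_le hq.le).1
        ((besselII hα 1).const_mul _)
    calc (∫ ϑ in Set.Ioc (0:ℝ) (π/2), ‖F2 m ϑ‖)
        ≤ ∫ ϑ in Set.Ioc (0:ℝ) (π/2),
            (2*|e m|) * (Real.sin ϑ ^ (2*α-1) * Real.cos ϑ ^ 1) :=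
          setIntegral_mono_on (hFint m).norm hconstint measurableSet_Ioc hptb
      _ = (2*|e m|) * (1/(2*α)) := by
          rw [integral_const_mul, hA0]
      _ = |e m| / α := by field_simp
      _ ≤ ((2*(m:ℝ)+2) / (Nat.factorial (2*m+1) : ℝ) * x^(2*m+1) * π) / α := by
          gcongr
          exact heabs m
      _ = (π/α) * ((2*(m:ℝ)+2) / (Nat.factorial (2*m+1) : ℝ) * x^(2*m+1)) := by
          field_simp
  have hsum : Summable (fun m : ℕ => ∫ ϑ in Set.Ioc (0:ℝ) (π/2), ‖F2 m ϑ‖) := by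
    refine Summable.of_nonneg_of_le (fun m => integral_nonneg (fun ϑ => norm_nonneg _)) hbound ?_
    exact (besselSummable hx.le).mul_left _
  have hswap := MeasureTheory.integral_tsum_of_summable_integral_norm hFint hsum
  rw [h1, intervalIntegral.integral_of_le hq.le, ← hswap]
  have hval : ∀ m : ℕ, (∫ ϑ in Set.Ioc (0:ℝ) (π/2), F2 m ϑ)
      = (2 * e m) * (Real.Gamma α * (Nat.factorial m : ℝ) / (2 * Real.Gamma ((m:ℝ)+α+1))) := by
    intro m
    rw [← intervalIntegral.integral_of_le hq.le, hF2]
    rw [intervalIntegral.integral_const_mul, besselA hα m]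
  rw [tsum_congr hval, ← tsum_mul_left]
  apply tsum_congr
  intro m
  have hBval : B m = π * ((Nat.factorial (2*(m+1)) : ℝ)
      / (4^(m+1) * (Nat.factorial (m+1) : ℝ)^2)) := by
    rw [hB]
    simp only []
    rw [show 2*m+2 = 2*(m+1) by ring, integral_sin_pow_even, besselW]
  have hr : (x/2:ℝ) ^ (2*(m:ℝ)+α) = (x/2)^(2*m) * (x/2)^α := by
    rw [show (2*(m:ℝ)+α) = ((2*m:ℕ):ℝ) + α by push_cast; ring,
      Real.rpow_add (by positivity), Real.rpow_natCast]
  have hfac1 : (Nat.factorial (2*(m+1)) : ℝ) = (2*(m:ℝ)+2) * (Nat.factorial (2*m+1) : ℝ) := by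
    rw [show 2*(m+1) = (2*m+1)+1 by ring, Nat.factorial_succ]; push_cast; ring
  have hfac2 : (Nat.factorial (m+1) : ℝ) = ((m:ℝ)+1) * (Nat.factorial m : ℝ) := by
    rw [Nat.factorial_succ]; push_cast; ring
  have hΓα : Real.Gamma α ≠ 0 := (Real.Gamma_pos_of_pos hα).ne'
  have hΓm : Real.Gamma ((m:ℝ)+α+1) ≠ 0 := (Real.Gamma_pos_of_pos (by positivity)).ne'
  have hfm : (Nat.factorial m : ℝ) ≠ 0 := Nat.cast_ne_zero.2 m.factorial_ne_zero
  have hf2m : (Nat.factorial (2*m+1) : ℝ) ≠ 0 := Nat.cast_ne_zero.2 (2*m+1).factorial_ne_zero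
  have hπ : (π:ℝ) ≠ 0 := Real.pi_ne_zero
  simp only [he]
  rw [hBval, hr, hfac1, hfac2]
  rw [show (4:ℝ) = 2^2 by norm_num, ← pow_mul]
  field_simp
  have h12 : ((1:ℝ)/2)^(m*2) * 2^(m*2) = 1 := by rw [← mul_pow]; norm_num
  linear_combination (x * x^(m*2) * 4) * h12
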